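/- Let n ≥ 1 and let a, x ∈ A_n with x doubly pure. Then ã·x = −(a·x)~, i.e. the tilde of the product a·x equals the negative of ã·x. -/

import Mathlib

noncomputable section

open scoped Quaternion

/-- The Cayley–Dickson algebra `A n = ℝ^(2^n)` as a type. -/
def CD : ℕ → Type
  | 0 => ℝ
  | n + 1 => CD n × CD n

namespace CD

instance instAddCommGroup : (n : ℕ) → AddCommGroup (CD n)
  | 0 => inferInstanceAs (AddCommGroup ℝ)
  | n + 1 =>
    letI := instAddCommGroup n
    inferInstanceAs (AddCommGroup (CD n × CD n))

instance instModule : (n : ℕ) → Module ℝ (CD n)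
  | 0 => inferInstanceAs (Module ℝ ℝ)
  | n + 1 =>
    letI := instModule n
    inferInstanceAs (Module ℝ (CD n × CD n))

/-- Conjugation in the Cayley–Dickson algebra. -/
def conj : {n : ℕ} → CD n → CD n
  | 0, x => x
  | _ + 1, x => (conj x.1, -x.2)

/-- Cayley–Dickson multiplication. -/
def mul : {n : ℕ} → CD n → CD n → CD n
  | 0, x, y => Mul.mul (α := ℝ) x y
  | _ + 1, x, y =>
    (mul x.1 y.1 - mul (conj y.2) x.2, mul y.2 x.1 + mul x.2 (conj y.1))

instance instMul (n : ℕ) : Mul (CD n) := ⟨mul⟩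

/-- The multiplicative unit `e₀`. -/
def one : {n : ℕ} → CD n
  | 0 => (1 : ℝ)
  | _ + 1 => (one, 0)

instance instOne (n : ℕ) : One (CD n) := ⟨one⟩

/-- The Euclidean inner product on `A n = ℝ^(2^n)`. -/
def inner : {n : ℕ} → CD n → CD n → ℝ
  | 0, x, y => (x * y : ℝ)
  | _ + 1, x, y => inner x.1 y.1 + inner x.2 y.2

/-- The Euclidean norm on `A n = ℝ^(2^n)`. -/
def norm {n : ℕ} (x : CD n) : ℝ := Real.sqrt (inner x x)

/-- `ã = (-a₂, a₁)`. -/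
def tilde {n : ℕ} (a : CD (n + 1)) : CD (n + 1) := (-a.2, a.1)

/-- `ẽ₀ = (0, e₀)`. -/
def etilde (n : ℕ) : CD (n + 1) := ((0 : CD n), (1 : CD n))

/-- An element is pure if its conjugate is its negative. -/
def IsPure {n : ℕ} (a : CD n) : Prop := conj a = -a

/-- An element of `A (n+1)` is doubly pure if both of its coordinates are pure. -/
def IsDoublyPure {n : ℕ} (a : CD (n + 1)) : Prop := IsPure a.1 ∧ IsPure a.2

/-- The associator `(a,b,c) = (ab)c - a(bc)`. -/
def assoc {n : ℕ} (a b c : CD n) : CD n := a * b * c - a * (b * c)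

/-- An element is alternative if `(a,a,x) = 0` for all `x`. -/
def IsAlternative {n : ℕ} (a : CD n) : Prop := ∀ x : CD n, assoc a a x = 0

/-- An element is strongly alternative if `(a,a,x) = 0` and `(a,x,x) = 0` for all `x`. -/
def IsStronglyAlternative {n : ℕ} (a : CD n) : Prop :=
  (∀ x : CD n, assoc a a x = 0) ∧ (∀ x : CD n, assoc a x x = 0)

/-- The pure (imaginary) part of an element. -/
def im {n : ℕ} (a : CD n) : CD n := (2⁻¹ : ℝ) • (a - conj a)

/-- `H a`, the span of `{e₀, ã, a, ẽ₀}`. -/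
def H {n : ℕ} (a : CD (n + 1)) : Submodule ℝ (CD (n + 1)) :=
  Submodule.span ℝ {(1 : CD (n + 1)), tilde a, a, etilde n}

/-- The orthogonal complement of `H a`. -/
def Hperp {n : ℕ} (a : CD (n + 1)) : Set (CD (n + 1)) :=
  {x | ∀ y ∈ H a, inner y x = 0}

end CD

lemma CD.conj_neg : ∀ {n : ℕ} (a : CD n), CD.conj (-a) = -CD.conj a
  | 0, _ => rfl
  | n + 1, a => by
    show ((CD.conj (-a).1, -(-a).2) : CD n × CD n) = _
    rw [show ((-a : CD (n+1)).1) = -a.1 from rfl, CD.conj_neg a.1]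
    rfl

mutual
lemma CD.neg_mul' : ∀ {n : ℕ} (a b : CD n), CD.mul (-a) b = -(CD.mul a b)
  | 0, a, b => neg_mul (α := ℝ) a b
  | n + 1, a, b => by
    show ((CD.mul (-a : CD (n+1)).1 b.1 - CD.mul (CD.conj b.2) (-a : CD (n+1)).2,
          CD.mul b.2 (-a : CD (n+1)).1 + CD.mul (-a : CD (n+1)).2 (CD.conj b.1)) : CD n × CD n) = _
    rw [show ((-a : CD (n+1)).1) = -a.1 from rfl, show ((-a : CD (n+1)).2) = -a.2 from rfl]
    rw [CD.neg_mul' a.1 b.1, CD.neg_mul' a.2 (CD.conj b.1)]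
    have h1 : CD.mul (CD.conj b.2) (-a.2) = -CD.mul (CD.conj b.2) a.2 := CD.mul_neg' _ _
    have h2 : CD.mul b.2 (-a.1) = -CD.mul b.2 a.1 := CD.mul_neg' _ _
    rw [h1, h2]
    show (_, _) = (-(CD.mul a b).1, -(CD.mul a b).2)
    exact Prod.ext (by simp only [CD.mul]; abel) (by simp only [CD.mul]; abel)

lemma CD.mul_neg' : ∀ {n : ℕ} (a b : CD n), CD.mul a (-b) = -(CD.mul a b)
  | 0, a, b => mul_neg (α := ℝ) a b
  | n + 1, a, b => by
    show ((CD.mul a.1 (-b : CD (n+1)).1 - CD.mul (CD.conj (-b : CD (n+1)).2) a.2,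
          CD.mul (-b : CD (n+1)).2 a.1 + CD.mul a.2 (CD.conj (-b : CD (n+1)).1)) : CD n × CD n) = _
    rw [show ((-b : CD (n+1)).1) = -b.1 from rfl, show ((-b : CD (n+1)).2) = -b.2 from rfl]
    rw [CD.mul_neg' a.1 b.1, CD.conj_neg b.2, CD.conj_neg b.1,
        CD.neg_mul' (CD.conj b.2) a.2, CD.neg_mul' b.2 a.1, CD.mul_neg' a.2 (CD.conj b.1)]
    show (_, _) = (-(CD.mul a b).1, -(CD.mul a b).2)
    exact Prod.ext (by simp only [CD.mul]; abel) (by simp only [CD.mul]; abel)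

end

lemma CD.fst_neg_aux {n : ℕ} (p : CD (n + 1)) : (-p).1 = -p.1 := rfl
lemma CD.snd_neg_aux {n : ℕ} (p : CD (n + 1)) : (-p).2 = -p.2 := rfl

/-- For `a, x ∈ A (n+1)` with `x` doubly pure, `ã·x = −(a·x)~`. -/
theorem tilde_mul_eq_neg_tilde_mul (n : ℕ) (a x : CD (n + 1))
    (hx : CD.IsDoublyPure x) :
    CD.tilde a * x = -CD.tilde (a * x) := by
  obtain ⟨h1, h2⟩ := hx
  simp only [CD.IsPure] at h1 h2
  show CD.mul (CD.tilde a) x = -CD.tilde (CD.mul a x)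
  simp only [CD.mul, CD.tilde, h1, h2, CD.neg_mul', CD.mul_neg', Prod.neg_mk]
  exact Prod.ext (by show -(CD.mul a.2 x.1) - -(CD.mul x.2 a.1) = -(-(CD.mul x.2 a.1 + -CD.mul a.2 x.1)); abel) (by show -(CD.mul x.2 a.2) + -(CD.mul a.1 x.1) = -(CD.mul a.1 x.1 - -CD.mul x.2 a.2); abel)
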